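/- Let k ≥ 5 be an odd integer. Then for every integer n ≥ 2 there exists a k-hyperhole H with ω(H) = n and χ(H) = f_k(n). -/

import Mathlib

open SimpleGraph

/-- The closed neighborhood `N_G[v]` of a vertex `v`. -/
def closedNbhd {V : Type} (G : SimpleGraph V) (v : V) : Set V :=
  insert v (G.neighborSet v)

/-- `X` (indexed cyclically by `ZMod k`) is a ring partition of `G`:
a partition into `k` nonempty sets, each of which can be ordered so that the
closed neighborhoods are nested, with the last one covering `X i` and the first
one being exactly `X (i-1) ∪ X i ∪ X (i+1)`. -/
def IsRingPartition {V : Type} (G : SimpleGraph V) (k : ℕ) (X : ZMod k → Set V) : Prop :=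
  (∀ i, (X i).Nonempty) ∧
  (∀ v : V, ∃! i, v ∈ X i) ∧
  ∀ i, ∃ (m : ℕ) (hm : 0 < m) (u : Fin m → V),
    Function.Injective u ∧
    Set.range u = X i ∧
    (∀ j j' : Fin m, j ≤ j' → closedNbhd G (u j') ⊆ closedNbhd G (u j)) ∧
    X i ⊆ closedNbhd G (u ⟨m - 1, by omega⟩) ∧
    closedNbhd G (u ⟨0, hm⟩) = X (i - 1) ∪ X i ∪ X (i + 1)

/-- `G` is a `k`-ring. -/
def IsRing {V : Type} (G : SimpleGraph V) (k : ℕ) : Prop :=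
  ∃ X : ZMod k → Set V, IsRingPartition G k X

/-- `X` is a hyperhole partition of `G`: a partition into `k` nonempty cliques,
each complete to the two neighboring cliques and anticomplete to all remaining
vertices. -/
def IsHyperholePartition {V : Type} (G : SimpleGraph V) (k : ℕ) (X : ZMod k → Set V) : Prop :=
  (∀ i, (X i).Nonempty) ∧
  (∀ v : V, ∃! i, v ∈ X i) ∧
  (∀ i, G.IsClique (X i)) ∧
  (∀ i, ∀ x ∈ X i, ∀ y ∈ X (i - 1) ∪ X (i + 1), G.Adj x y) ∧
  (∀ i, ∀ x ∈ X i, ∀ y, y ∉ X (i - 1) ∪ X i ∪ X (i + 1) → ¬ G.Adj x y)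

/-- `G` is a `k`-hyperhole. -/
def IsHyperhole {V : Type} (G : SimpleGraph V) (k : ℕ) : Prop :=
  ∃ X : ZMod k → Set V, IsHyperholePartition G k X

/-- `X` is a hyperantihole partition of `G`: a partition into `k` nonempty cliques,
each complete to all vertices outside the two neighboring cliques (and itself),
and anticomplete to the two neighboring cliques. -/
def IsHyperantiholePartition {V : Type} (G : SimpleGraph V) (k : ℕ) (X : ZMod k → Set V) : Prop :=
  (∀ i, (X i).Nonempty) ∧
  (∀ v : V, ∃! i, v ∈ X i) ∧
  (∀ i, G.IsClique (X i)) ∧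
  (∀ i, ∀ x ∈ X i, ∀ y, y ∉ X (i - 1) ∪ X i ∪ X (i + 1) → G.Adj x y) ∧
  (∀ i, ∀ x ∈ X i, ∀ y ∈ X (i - 1) ∪ X (i + 1), ¬ G.Adj x y)

/-- `G` is a `k`-hyperantihole. -/
def IsHyperantihole {V : Type} (G : SimpleGraph V) (k : ℕ) : Prop :=
  ∃ X : ZMod k → Set V, IsHyperantiholePartition G k X

/-- A vertex is simplicial if its neighborhood is a clique. -/
def IsSimplicial {V : Type} (G : SimpleGraph V) (v : V) : Prop :=
  G.IsClique (G.neighborSet v)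

/-- A graph is perfect if every induced subgraph has chromatic number equal to
its clique number. -/
def IsPerfect {V : Type} (G : SimpleGraph V) : Prop :=
  ∀ S : Set V, (G.induce S).chromaticNumber = ((G.induce S).cliqueNum : ℕ∞)

/-- The function `f_k`: `⌊kn/(k-1)⌋` if `n ≡ 0, 1 (mod k-1)`, and `⌈kn/(k-1)⌉`
otherwise. -/
def ringF (k n : ℕ) : ℕ :=
  if n % (k - 1) ≤ 1 then k * n / (k - 1) else (k * n + (k - 2)) / (k - 1)

/-- The function `g_k`: `⌊kn/(k-1)⌋` if `n mod (k-1) ∈ {0, …, (k-3)/2}`, and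
`⌈kn/(k-1)⌉` if `n mod (k-1) ∈ {(k-1)/2, …, k-2}`. -/
def ringG (k n : ℕ) : ℕ :=
  if n % (k - 1) ≤ (k - 3) / 2 then k * n / (k - 1) else (k * n + (k - 2)) / (k - 1)

/-- The function `f_T`: `⌊5n/4⌋` if `n ≡ 0, 1 (mod 4)`, and `⌈5n/4⌉` if
`n ≡ 2, 3 (mod 4)`. -/
def fT (n : ℕ) : ℕ :=
  if n % 4 ≤ 1 then 5 * n / 4 else (5 * n + 3) / 4

/-- `G` contains the complete graph `K_m` as a minor, witnessed by `m` pairwise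
disjoint nonempty branch sets, each inducing a connected subgraph, with an edge
between every two of them. -/
def HasCompleteMinor {V : Type} (G : SimpleGraph V) (m : ℕ) : Prop :=
  ∃ S : Fin m → Set V,
    (∀ i, (S i).Nonempty) ∧
    (∀ i j, i ≠ j → Disjoint (S i) (S j)) ∧
    (∀ i, (G.induce (S i)).Connected) ∧
    (∀ i j, i ≠ j → ∃ x ∈ S i, ∃ y ∈ S j, G.Adj x y)

namespace HHC

/-- part of vertex `v` -/
def pf (n v : ℕ) : ℕ := (2 * v + 1) / n

/-- boundary of part `i` -/
def Ab (n i : ℕ) : ℕ := i * n / 2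

def cRel (k : ℕ) (a b : ZMod k) : Prop := a = b ∨ a = b + 1 ∨ b = a + 1

def BG (k n N : ℕ) : SimpleGraph (Fin N) where
  Adj u v := u ≠ v ∧ cRel k (pf n u.val : ZMod k) (pf n v.val : ZMod k)
  symm := ⟨by rintro u v ⟨h1, h2⟩; exact ⟨h1.symm, by unfold cRel at *; tauto⟩⟩
  loopless := ⟨by rintro v ⟨h1, -⟩; exact h1 rfl⟩

lemma Ab_mono (n : ℕ) {i j : ℕ} (h : i ≤ j) : Ab n i ≤ Ab n j :=
  Nat.div_le_div_right (Nat.mul_le_mul_right n h)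

lemma Ab_add_two (n i : ℕ) : Ab n (i + 2) = Ab n i + n := by
  unfold Ab; rw [add_mul]; omega

lemma Ab_strict {n : ℕ} (hn : 2 ≤ n) (i : ℕ) : Ab n i < Ab n (i + 1) := by
  unfold Ab; rw [add_mul]; omega

lemma Ab_wrap (n j : ℕ) : Ab n j + Ab n 1 ≤ Ab n (j + 1) := by
  unfold Ab
  calc j * n / 2 + 1 * n / 2 ≤ (j * n + 1 * n) / 2 := Nat.add_div_le_add_div _ _ _
    _ = (j + 1) * n / 2 := by rw [← add_mul]

lemma pf_lb (n v : ℕ) : Ab n (pf n v) ≤ v := by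
  have h1 : (2 * v + 1) / n * n ≤ 2 * v + 1 := Nat.div_mul_le_self _ _
  unfold Ab pf; omega

lemma pf_ub {n : ℕ} (hn : 0 < n) (v : ℕ) : v < Ab n (pf n v + 1) := by
  have h1 : 2 * v + 1 < n * ((2 * v + 1) / n + 1) := Nat.lt_mul_div_succ _ hn
  have h2 : n * ((2 * v + 1) / n + 1) = ((2 * v + 1) / n + 1) * n := mul_comm _ _
  unfold Ab pf; omega

lemma pf_lt {k n : ℕ} (hn : 0 < n) {v : ℕ} (hv : v < k * n / 2) : pf n v < k := by
  rw [pf, Nat.div_lt_iff_lt_mul hn]; omega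

lemma pf_eq {n : ℕ} (hn : 0 < n) {i v : ℕ} (h1 : Ab n i ≤ v) (h2 : v < Ab n (i + 1)) :
    pf n v = i := by
  rcases lt_trichotomy (pf n v) i with h | h | h
  · have h3 := Ab_mono n (show pf n v + 1 ≤ i by omega)
    have h4 := pf_ub hn v
    omega
  · exact h
  · have h3 := Ab_mono n (show i + 1 ≤ pf n v by omega)
    have h4 := pf_lb n v
    omega

lemma zmod_eq {k a b : ℕ} (ha : a < k) (hb : b < k) (h : (a : ZMod k) = b) : a = b := by
  rw [ZMod.natCast_eq_natCast_iff'] at h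
  rwa [Nat.mod_eq_of_lt ha, Nat.mod_eq_of_lt hb] at h

lemma zmod_succ {k a b : ℕ} (ha : a < k) (hb : b < k) (h : (a : ZMod k) = (b : ZMod k) + 1) :
    a = b + 1 ∨ (b + 1 = k ∧ a = 0) := by
  have h2 : ((b + 1 : ℕ) : ZMod k) = (a : ZMod k) := by push_cast; exact h.symm
  rw [ZMod.natCast_eq_natCast_iff', Nat.mod_eq_of_lt ha] at h2
  rcases Nat.lt_or_ge (b + 1) k with h3 | h3
  · rw [Nat.mod_eq_of_lt h3] at h2; left; omega
  · have h4 : b + 1 = k := by omega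
    rw [h4, Nat.mod_self] at h2; right; omega

lemma cRel_nat {k a b : ℕ} (ha : a < k) (hb : b < k) (h : cRel k (a : ZMod k) (b : ZMod k)) :
    a = b ∨ a = b + 1 ∨ b = a + 1 ∨ (a = 0 ∧ b + 1 = k) ∨ (b = 0 ∧ a + 1 = k) := by
  rcases h with h | h | h
  · exact Or.inl (zmod_eq ha hb h)
  · rcases zmod_succ ha hb h with h | h
    · tauto
    · exact Or.inr (Or.inr (Or.inr (Or.inl ⟨h.2, h.1⟩)))
  · rcases zmod_succ hb ha h with h | h
    · tauto
    · exact Or.inr (Or.inr (Or.inr (Or.inr ⟨h.2, h.1⟩)))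

lemma cRel_of {k a b : ℕ}
    (h : a = b ∨ a = b + 1 ∨ b = a + 1 ∨ (a = 0 ∧ b + 1 = k) ∨ (b = 0 ∧ a + 1 = k)) :
    cRel k (a : ZMod k) (b : ZMod k) := by
  rcases h with h | h | h | ⟨h1, h2⟩ | ⟨h1, h2⟩
  · left; rw [h]
  · right; left; rw [h]; push_cast; ring
  · right; right; rw [h]; push_cast; ring
  · right; left
    have : ((b + 1 : ℕ) : ZMod k) = 0 := by rw [h2]; exact ZMod.natCast_self k
    push_cast at this
    rw [h1]; push_cast; rw [this]
  · right; right
    have : ((a + 1 : ℕ) : ZMod k) = 0 := by rw [h2]; exact ZMod.natCast_self k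
    push_cast at this
    rw [h1]; push_cast; rw [this]

lemma mod_ne_between {f x y m : ℕ} (hf : 0 < f) (h1 : m * f + x < y) (h2 : y < (m + 1) * f + x) :
    x % f ≠ y % f := by
  intro hxy
  have hle : x ≤ y := by omega
  have hdvd : f ∣ y - x := (Nat.modEq_iff_dvd' hle).mp hxy
  obtain ⟨t, ht⟩ := hdvd
  have hc1 : m * f = f * m := mul_comm _ _
  have hc2 : (m + 1) * f = f * (m + 1) := mul_comm _ _
  have h3 : f * m < f * t := by omega
  have h4 : f * t < f * (m + 1) := by omega
  have h5 := Nat.lt_of_mul_lt_mul_left h3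
  have h6 := Nat.lt_of_mul_lt_mul_left h4
  omega

lemma arith (k c n : ℕ) (hk : k = 2 * c + 1) (hc : 2 ≤ c) (hn : 2 ≤ n) :
    n + 1 ≤ ringF k n ∧ ringF k n * c < k * n / 2 + c ∧ k * n / 2 ≤ ringF k n * c := by
  subst hk
  obtain ⟨q, hq⟩ : ∃ q, q = n / (2 * c) := ⟨_, rfl⟩
  obtain ⟨r, hrdef⟩ : ∃ r, r = n % (2 * c) := ⟨_, rfl⟩
  have hdm : 2 * c * q + r = n := by rw [hq, hrdef]; exact Nat.div_add_mod n (2 * c)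
  have hr : r < 2 * c := by rw [hrdef]; exact Nat.mod_lt _ (by omega)
  have p1 : 2 * c * q = 2 * (c * q) := by ring
  have e1 : (2 * c + 1) * n = 2 * c * (n + q) + r := by
    have hdm' := hdm
    zify at hdm' ⊢; linear_combination -hdm' 
  have p2 : 2 * c * (n + q) = 2 * (c * n) + 2 * (c * q) := by ring
  have hmod2 : (2 * (c * n + c * q) + r) % 2 = r % 2 := Nat.mul_add_mod 2 _ r
  have hN2 : 2 * ((2 * c + 1) * n / 2) + r % 2 = 2 * (c * n) + 2 * (c * q) + r := by
    have h7 : (2 * c + 1) * n = 2 * (c * n + c * q) + r := by omega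
    have h8 := Nat.div_add_mod ((2 * c + 1) * n) 2
    have h9 : (2 * c + 1) * n % 2 = r % 2 := by rw [h7]; exact hmod2
    omega
  have hk1 : 2 * c + 1 - 1 = 2 * c := by omega
  have hk2 : 2 * c + 1 - 2 = 2 * c - 1 := by omega
  rw [ringF, hk1, hk2, ← hrdef]
  split_ifs with hr1
  · have e3 : (2 * c + 1) * n / (2 * c) = n + q := by
      rw [e1, Nat.mul_add_div (by omega), Nat.div_eq_of_lt hr, add_zero]
    rw [e3]
    have p3 : (n + q) * c = c * n + c * q := by ring
    rcases Nat.eq_zero_or_pos q with h0 | h1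
    · exfalso; rw [h0] at hdm; omega
    · omega
  · have p4 : 2 * c * (n + q + 1) = 2 * (c * n) + 2 * (c * q) + 2 * c := by ring
    have e3' : (2 * c + 1) * n + (2 * c - 1) = 2 * c * (n + q + 1) + (r - 1) := by omega
    have e3 : ((2 * c + 1) * n + (2 * c - 1)) / (2 * c) = n + q + 1 := by
      rw [e3', Nat.mul_add_div (by omega), Nat.div_eq_of_lt (by omega), add_zero]
    rw [e3]
    have p3 : (n + q + 1) * c = c * n + c * q + c := by ring
    omega


lemma color_valid (k c n N f Gg : ℕ) (hk : k = 2 * c + 1) (hc : 2 ≤ c) (hn : 2 ≤ n)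
    (hN : N = k * n / 2) (hf1 : n + 1 ≤ f) (hfl : f * c < N + c) (hfu : N ≤ f * c)
    (hG : Gg = f * c - N) {u v : Fin N} (h : (BG k n N).Adj u v) :
    (u.val + min (pf n u.val) Gg) % f ≠ (v.val + min (pf n v.val) Gg) % f := by
  obtain ⟨hne, hrel⟩ := h
  have hn0 : 0 < n := by omega
  have hf0 : 0 < f := by omega
  have hak : pf n u.val < k := pf_lt hn0 (hN ▸ u.isLt)
  have hbk : pf n v.val < k := pf_lt hn0 (hN ▸ v.isLt)
  have hua := pf_lb n u.val
  have hua' := pf_ub hn0 u.val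
  have hva := pf_lb n v.val
  have hva' := pf_ub hn0 v.val
  have hvalne : u.val ≠ v.val := fun hh => hne (Fin.ext hh)
  have hGc : Gg < c := by omega
  have hrel' := cRel_nat hak hbk hrel
  set a := pf n u.val with hadef
  set b := pf n v.val with hbdef
  rcases hrel' with heq | hab | hba | ⟨hw1, hw2⟩ | ⟨hw1, hw2⟩
  · -- same part
    rw [heq]
    rw [heq] at hua hua'
    have h1 : Ab n (b + 1) ≤ Ab n b + n := by
      have := Ab_add_two n b
      have := Ab_mono n (show b + 1 ≤ b + 2 by omega)
      omega
    rcases Nat.lt_or_ge u.val v.val with hlt | hge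
    · exact mod_ne_between (m := 0) hf0 (by omega) (by omega)
    · exact (mod_ne_between (m := 0) hf0 (by omega) (by omega)).symm
  · -- a = b + 1
    rw [hab] at hua hua' ⊢
    have h1 : Ab n (b + 2) = Ab n b + n := Ab_add_two n b
    have h1' : Ab n (b + 1 + 1) = Ab n (b + 2) := by rw [show b + 1 + 1 = b + 2 by omega]
    have h2 : min b Gg ≤ min (b + 1) Gg := by omega
    have h3 : min (b + 1) Gg ≤ min b Gg + 1 := by omega
    exact (mod_ne_between (m := 0) hf0 (by omega) (by omega)).symm
  · -- b = a + 1
    rw [hba] at hva hva' ⊢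
    have h1 : Ab n (a + 2) = Ab n a + n := Ab_add_two n a
    have h1' : Ab n (a + 1 + 1) = Ab n (a + 2) := by rw [show a + 1 + 1 = a + 2 by omega]
    have h2 : min a Gg ≤ min (a + 1) Gg := by omega
    have h3 : min (a + 1) Gg ≤ min a Gg + 1 := by omega
    exact mod_ne_between (m := 0) hf0 (by omega) (by omega)
  · -- wrap : a = 0, b = k - 1
    rw [hw1] at hua hua' ⊢
    have hb1 : b + 1 = k := hw2
    have hAbk : Ab n k = N := by rw [hN]; rfl
    have hv2 : v.val < N := v.isLt
    have h01 : Ab n (0 + 1) = Ab n 1 := by norm_num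
    have hwr : Ab n k + Ab n 1 ≤ Ab n b + n := by
      have h5 := Ab_wrap n k
      have h6 : Ab n (k + 1) = Ab n b + n := by
        rw [show k + 1 = b + 2 by omega]; exact Ab_add_two n b
      omega
    have hbk' : Ab n (b + 1) = Ab n k := by rw [hb1]
    have hNG : N + Gg = f * c := by omega
    have eA : (c - 1) * f + f = c * f := by
      rw [show (c - 1) * f + f = (c - 1 + 1) * f by ring, show c - 1 + 1 = c by omega]
    have eB : (c - 1 + 1) * f = (c - 1) * f + f := by ring
    have eC : c * f = f * c := mul_comm _ _
    have hminb : min b Gg = Gg := by omega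
    have hmin0 : min 0 Gg = 0 := by omega
    rw [hminb, hmin0]
    exact mod_ne_between (m := c - 1) hf0 (by omega) (by omega)
  · -- wrap : b = 0, a = k - 1
    rw [hw1] at hva hva' ⊢
    have ha1 : a + 1 = k := hw2
    have hAbk : Ab n k = N := by rw [hN]; rfl
    have hu2 : u.val < N := u.isLt
    have h01 : Ab n (0 + 1) = Ab n 1 := by norm_num
    have hwr : Ab n k + Ab n 1 ≤ Ab n a + n := by
      have h5 := Ab_wrap n k
      have h6 : Ab n (k + 1) = Ab n a + n := by
        rw [show k + 1 = a + 2 by omega]; exact Ab_add_two n a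
      omega
    have hak' : Ab n (a + 1) = Ab n k := by rw [ha1]
    have hNG : N + Gg = f * c := by omega
    have eA : (c - 1) * f + f = c * f := by
      rw [show (c - 1) * f + f = (c - 1 + 1) * f by ring, show c - 1 + 1 = c by omega]
    have eB : (c - 1 + 1) * f = (c - 1) * f + f := by ring
    have eC : c * f = f * c := mul_comm _ _
    have hmina : min a Gg = Gg := by omega
    have hmin0 : min 0 Gg = 0 := by omega
    rw [hmina, hmin0]
    exact (mod_ne_between (m := c - 1) hf0 (by omega) (by omega)).symm

lemma BG_colorable (k c n N f Gg : ℕ) (hk : k = 2 * c + 1) (hc : 2 ≤ c) (hn : 2 ≤ n)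
    (hN : N = k * n / 2) (hf1 : n + 1 ≤ f) (hfl : f * c < N + c) (hfu : N ≤ f * c)
    (hG : Gg = f * c - N) : (BG k n N).Colorable f := by
  have hf0 : 0 < f := by omega
  exact ⟨Coloring.mk
    (fun v => ⟨(v.val + min (pf n v.val) Gg) % f, Nat.mod_lt _ hf0⟩)
    (fun {u v} hadj hEq =>
      color_valid k c n N f Gg hk hc hn hN hf1 hfl hfu hG hadj (congrArg Fin.val hEq))⟩


lemma BG_chrom_lb (k c n N f : ℕ) (hk : k = 2 * c + 1) (hc : 2 ≤ c) (hn : 2 ≤ n)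
    (hN : N = k * n / 2) (hfl : f * c < N + c)
    (cc : ℕ) (hcol : (BG k n N).Colorable cc) : f ≤ cc := by
  classical
  obtain ⟨C⟩ := hcol
  have hn0 : 0 < n := by omega
  have key : ∀ j : Fin cc, (Finset.univ.filter (fun v : Fin N => C v = j)).card ≤ c := by
    intro j
    set S := Finset.univ.filter (fun v : Fin N => C v = j) with hS
    have hSind : ∀ u ∈ S, ∀ v ∈ S, u ≠ v → ¬ (BG k n N).Adj u v := by
      intro u hu v hv huv hadj
      have h1 := C.valid hadj
      rw [hS, Finset.mem_filter] at hu hv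
      exact h1 (hu.2.trans hv.2.symm)
    have hinj : Set.InjOn (fun v : Fin N => pf n v.val) S := by
      intro u hu v hv he
      by_contra hne
      exact hSind u hu v hv hne ⟨hne, by dsimp at he; rw [he]; exact Or.inl rfl⟩
    set T := S.image (fun v : Fin N => pf n v.val) with hT
    have hTcard : T.card = S.card := Finset.card_image_of_injOn hinj
    have hmemT : ∀ i ∈ T, ∃ v ∈ S, pf n v.val = i := by
      intro i hi
      rw [hT, Finset.mem_image] at hi
      obtain ⟨v, hv, he⟩ := hi
      exact ⟨v, hv, he⟩
    have hTsub : T ⊆ Finset.range k := by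
      intro i hi
      obtain ⟨v, hv, he⟩ := hmemT i hi
      exact Finset.mem_range.mpr (he ▸ pf_lt hn0 (hN ▸ v.isLt))
    set T' := T.image (fun i => (i + 1) % k) with hT'
    have hT'sub : T' ⊆ Finset.range k := by
      intro i hi
      rw [hT', Finset.mem_image] at hi
      obtain ⟨i0, _, he⟩ := hi
      exact Finset.mem_range.mpr (he ▸ Nat.mod_lt _ (by omega))
    have hT'card : T'.card = T.card := by
      apply Finset.card_image_of_injOn
      intro i hi i0 hi0 he
      have h1 : i < k := Finset.mem_range.mp (hTsub hi)
      have h2 : i0 < k := Finset.mem_range.mp (hTsub hi0)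
      dsimp at he
      have e1 : (i + 1) % k = if i + 1 = k then 0 else i + 1 := by
        split_ifs with h
        · rw [h, Nat.mod_self]
        · exact Nat.mod_eq_of_lt (by omega)
      have e2 : (i0 + 1) % k = if i0 + 1 = k then 0 else i0 + 1 := by
        split_ifs with h
        · rw [h, Nat.mod_self]
        · exact Nat.mod_eq_of_lt (by omega)
      split_ifs at e1 e2 <;> omega
    have hdisj : Disjoint T T' := by
      rw [Finset.disjoint_left]
      intro i hiT hiT'
      rw [hT', Finset.mem_image] at hiT'
      obtain ⟨i0, hi0T, hmod⟩ := hiT'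
      obtain ⟨u, hu, hpu⟩ := hmemT i hiT
      obtain ⟨v, hv, hpv⟩ := hmemT i0 hi0T
      have hi0k : i0 < k := Finset.mem_range.mp (hTsub hi0T)
      have hune : u ≠ v := by
        intro h
        rw [h, hpv] at hpu
        have : (i0 + 1) % k = if i0 + 1 = k then 0 else i0 + 1 := by
          split_ifs with hh
          · rw [hh, Nat.mod_self]
          · exact Nat.mod_eq_of_lt (by omega)
        split_ifs at this <;> omega
      apply hSind u hu v hv hune
      refine ⟨hune, Or.inr (Or.inl ?_)⟩
      rw [hpu, hpv, ← hmod]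
      rw [ZMod.natCast_mod]
      push_cast
      ring
    have hcard : T.card + T'.card ≤ k := by
      rw [← Finset.card_union_of_disjoint hdisj]
      calc (T ∪ T').card ≤ (Finset.range k).card :=
            Finset.card_le_card (Finset.union_subset hTsub hT'sub)
        _ = k := Finset.card_range k
    omega
  have hsum : N = ∑ j : Fin cc, (Finset.univ.filter (fun v : Fin N => C v = j)).card := by
    have h1 := Finset.card_eq_sum_card_fiberwise
      (fun (v : Fin N) (_ : v ∈ Finset.univ) => Finset.mem_univ (C v))
    rw [Finset.card_univ, Fintype.card_fin] at h1
    exact h1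
  have hNle : N ≤ cc * c := by
    rw [hsum]
    calc ∑ j : Fin cc, (Finset.univ.filter (fun v : Fin N => C v = j)).card
        ≤ ∑ _j : Fin cc, c := Finset.sum_le_sum (fun j _ => key j)
      _ = cc * c := by simp [Finset.sum_const, Finset.card_univ, mul_comm]
  by_contra hlt
  push_neg at hlt
  have h1 : (cc + 1) * c ≤ f * c := Nat.mul_le_mul_right c (by omega)
  have h2 : (cc + 1) * c = cc * c + c := by ring
  omega

lemma clique_bound (k c n N : ℕ) (hk : k = 2 * c + 1) (hc : 2 ≤ c) (hn : 2 ≤ n)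
    (hN : N = k * n / 2) {s : Finset (Fin N)} (hs : (BG k n N).IsClique s) :
    s.card ≤ n := by
  classical
  have hn0 : 0 < n := by omega
  set P := s.image (fun v : Fin N => pf n v.val) with hP
  have hmemP : ∀ i ∈ P, ∃ v ∈ s, pf n v.val = i := by
    intro i hi
    rw [hP, Finset.mem_image] at hi
    obtain ⟨v, hv, he⟩ := hi
    exact ⟨v, hv, he⟩
  have hPk : ∀ i ∈ P, i < k := by
    intro i hi
    obtain ⟨v, hv, he⟩ := hmemP i hi
    exact he ▸ pf_lt hn0 (hN ▸ v.isLt)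
  have hrel : ∀ i ∈ P, ∀ j ∈ P, i ≠ j →
      i = j + 1 ∨ j = i + 1 ∨ (i = 0 ∧ j + 1 = k) ∨ (j = 0 ∧ i + 1 = k) := by
    intro i hi j hj hij
    obtain ⟨u, hu, hpu⟩ := hmemP i hi
    obtain ⟨v, hv, hpv⟩ := hmemP j hj
    have hune : u ≠ v := by intro h; rw [h, hpv] at hpu; exact hij hpu.symm
    have hadj := hs hu hv hune
    obtain ⟨-, hcr⟩ := hadj
    rw [hpu, hpv] at hcr
    rcases cRel_nat (hPk i hi) (hPk j hj) hcr with h | h | h | h | h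
    · exact absurd h hij
    all_goals tauto
  have hP2 : P.card ≤ 2 := by
    by_contra hgt
    have h2lt : 2 < P.card := by omega
    obtain ⟨x, y, z, hx, hy, hz, hxy, hxz, hyz⟩ := Finset.two_lt_card_iff.mp h2lt
    have h1 := hrel x hx y hy hxy
    have h2 := hrel x hx z hz hxz
    have h3 := hrel y hy z hz hyz
    have := hPk x hx; have := hPk y hy; have := hPk z hz
    omega
  have hsub : s.image (fun v : Fin N => v.val) ⊆
      P.biUnion (fun i => Finset.Ico (Ab n i) (Ab n (i + 1))) := by
    intro w hw
    rw [Finset.mem_image] at hw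
    obtain ⟨v, hv, rfl⟩ := hw
    rw [Finset.mem_biUnion]
    refine ⟨pf n v.val, ?_, ?_⟩
    · rw [hP, Finset.mem_image]; exact ⟨v, hv, rfl⟩
    · rw [Finset.mem_Ico]; exact ⟨pf_lb n v.val, pf_ub hn0 v.val⟩
  have hcard1 : s.card ≤ ∑ i ∈ P, (Finset.Ico (Ab n i) (Ab n (i + 1))).card := by
    calc s.card = (s.image (fun v : Fin N => v.val)).card :=
          (Finset.card_image_of_injective s Fin.val_injective).symm
      _ ≤ (P.biUnion (fun i => Finset.Ico (Ab n i) (Ab n (i + 1)))).card :=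
          Finset.card_le_card hsub
      _ ≤ ∑ i ∈ P, (Finset.Ico (Ab n i) (Ab n (i + 1))).card := Finset.card_biUnion_le
  have hval : ∀ i, (Finset.Ico (Ab n i) (Ab n (i + 1))).card = Ab n (i + 1) - Ab n i := by
    intro i; exact Nat.card_Ico _ _
  -- bound the sum
  interval_cases hPc : P.card
  · -- card 0
    rw [Finset.card_eq_zero.mp hPc, Finset.sum_empty] at hcard1
    omega
  · -- card 1
    obtain ⟨α, hα⟩ := Finset.card_eq_one.mp hPc
    rw [hα, Finset.sum_singleton, hval] at hcard1
    have h1 : Ab n (α + 2) = Ab n α + n := Ab_add_two n α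
    have h2 := Ab_mono n (show α + 1 ≤ α + 2 by omega)
    omega
  · -- card 2
    obtain ⟨α, β, hab, hαβ⟩ := Finset.card_eq_two.mp hPc
    have hαP : α ∈ P := by rw [hαβ]; simp
    have hβP : β ∈ P := by rw [hαβ]; simp
    rw [hαβ, Finset.sum_pair hab, hval, hval] at hcard1
    have hAk : Ab n k + Ab n 1 ≤ Ab n (k - 1) + n := by
      have h5 := Ab_wrap n k
      have h6 : Ab n (k + 1) = Ab n (k - 1) + n := by
        rw [show k + 1 = (k - 1) + 2 by omega]; exact Ab_add_two n (k - 1)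
      omega
    have hA0 : Ab n 0 = 0 := by simp [Ab]
    rcases hrel α hαP β hβP hab with h | h | ⟨h1, h2⟩ | ⟨h1, h2⟩
    · -- α = β + 1
      have e1 : Ab n (β + 2) = Ab n β + n := Ab_add_two n β
      have e2 : Ab n (α + 1) = Ab n (β + 2) := by rw [show α + 1 = β + 2 by omega]
      have e3 : Ab n α = Ab n (β + 1) := by rw [h]
      have := Ab_mono n (show β ≤ β + 1 by omega)
      have := Ab_mono n (show β + 1 ≤ β + 2 by omega)
      omega
    · -- β = α + 1
      have e1 : Ab n (α + 2) = Ab n α + n := Ab_add_two n α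
      have e2 : Ab n (β + 1) = Ab n (α + 2) := by rw [show β + 1 = α + 2 by omega]
      have e3 : Ab n β = Ab n (α + 1) := by rw [h]
      have := Ab_mono n (show α ≤ α + 1 by omega)
      have := Ab_mono n (show α + 1 ≤ α + 2 by omega)
      omega
    · -- α = 0, β = k - 1
      have e1 : Ab n (α + 1) = Ab n 1 := by rw [h1]
      have e2 : Ab n (β + 1) = Ab n k := by rw [show β + 1 = k by omega]
      have e3 : Ab n β = Ab n (k - 1) := by rw [show β = k - 1 by omega]
      have e4 : Ab n α = Ab n 0 := by rw [h1]
      have := Ab_mono n (show k - 1 ≤ k by omega)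
      have := Ab_mono n (show (0:ℕ) ≤ 1 by omega)
      omega
    · -- β = 0, α = k - 1
      have e1 : Ab n (β + 1) = Ab n 1 := by rw [h1]
      have e2 : Ab n (α + 1) = Ab n k := by rw [show α + 1 = k by omega]
      have e3 : Ab n α = Ab n (k - 1) := by rw [show α = k - 1 by omega]
      have e4 : Ab n β = Ab n 0 := by rw [h1]
      have := Ab_mono n (show k - 1 ≤ k by omega)
      have := Ab_mono n (show (0:ℕ) ≤ 1 by omega)
      omega


lemma clique_lower (k c n N : ℕ) (hk : k = 2 * c + 1) (hc : 2 ≤ c) (hn : 2 ≤ n)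
    (hN : N = k * n / 2) : n ≤ (BG k n N).cliqueNum := by
  have hn0 : 0 < n := by omega
  have hnN : n ≤ N := by
    have h1 : 2 * n ≤ k * n := Nat.mul_le_mul_right n (by omega)
    omega
  set t : Finset (Fin N) :=
    Finset.map ⟨fun j : Fin n => (⟨j.val, lt_of_lt_of_le j.isLt hnN⟩ : Fin N),
      by
        intro a b hab
        simp only [Fin.mk.injEq] at hab
        exact Fin.ext hab⟩ Finset.univ with ht
  have hmem : ∀ v ∈ t, v.val < n := by
    intro v hv
    rw [ht, Finset.mem_map] at hv
    obtain ⟨j, -, he⟩ := hv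
    rw [← he]; exact j.isLt
  have hA2 : Ab n 2 = n := by unfold Ab; omega
  have hpf01 : ∀ v : Fin N, v.val < n → pf n v.val = 0 ∨ pf n v.val = 1 := by
    intro v hv
    have h1 := pf_lb n v.val
    have h2 := pf_ub hn0 v.val
    by_contra hcon
    push_neg at hcon
    have h3 : 2 ≤ pf n v.val := by omega
    have h4 := Ab_mono n h3
    omega
  have hcl : (BG k n N).IsClique t := by
    intro u hu v hv hne
    rw [Finset.mem_coe] at hu hv
    refine ⟨hne, ?_⟩
    apply cRel_of
    rcases hpf01 u (hmem u hu) with h1 | h1 <;> rcases hpf01 v (hmem v hv) with h2 | h2 <;>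
      rw [h1, h2] <;> omega
  have hcard : t.card = n := by rw [ht, Finset.card_map, Finset.card_univ, Fintype.card_fin]
  calc n = t.card := hcard.symm
    _ ≤ _ := IsClique.card_le_cliqueNum (tc := hcl)

end HHC

namespace HHC

lemma BG_hyperhole (k c n N : ℕ) (hk : k = 2 * c + 1) (hc : 2 ≤ c) (hn : 2 ≤ n)
    (hN : N = k * n / 2) : IsHyperhole (BG k n N) k := by
  haveI : NeZero k := ⟨by omega⟩
  haveI : Fact (1 < k) := ⟨by omega⟩
  have hn0 : 0 < n := by omega
  refine ⟨fun i => {v : Fin N | (pf n v.val : ZMod k) = i}, ?_, ?_, ?_, ?_, ?_⟩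
  · intro i
    have hik : i.val < k := ZMod.val_lt i
    have hlt : Ab n i.val < N := by
      have h1 := Ab_strict hn i.val
      have h2 := Ab_mono n (show i.val + 1 ≤ k by omega)
      have h3 : Ab n k = N := by rw [hN]; rfl
      omega
    refine ⟨⟨Ab n i.val, hlt⟩, ?_⟩
    show (pf n (Ab n i.val) : ZMod k) = i
    rw [pf_eq hn0 (le_refl _) (Ab_strict hn i.val)]
    exact (ZMod.natCast_val i).trans (ZMod.cast_id _ _)
  · intro v
    exact ⟨(pf n v.val : ZMod k), rfl, fun y hy => hy.symm⟩
  · intro i u hu v hv hne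
    rw [Set.mem_setOf_eq] at hu hv
    exact ⟨hne, Or.inl (hu.trans hv.symm)⟩
  · intro i x hx y hy
    rw [Set.mem_setOf_eq] at hx
    rcases hy with hy | hy <;> rw [Set.mem_setOf_eq] at hy
    · refine ⟨?_, ?_⟩
      · intro he
        rw [he, hy] at hx
        exact one_ne_zero (sub_eq_self.mp hx)
      · right; left; rw [hx, hy]; ring
    · refine ⟨?_, ?_⟩
      · intro he
        rw [he, hy] at hx
        exact one_ne_zero (by linear_combination hx)
      · right; right; rw [hx, hy]
  · intro i x hx y hy hadj
    obtain ⟨hne, hrel⟩ := hadj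
    rw [Set.mem_setOf_eq] at hx
    apply hy
    rcases hrel with h | h | h
    · left; right; rw [Set.mem_setOf_eq, ← hx]; exact h.symm
    · left; left
      rw [Set.mem_setOf_eq]
      rw [hx] at h
      exact eq_sub_of_add_eq h.symm
    · right
      rw [Set.mem_setOf_eq, ← hx]
      exact h

end HHC


/-- For odd `k ≥ 5` and every `n ≥ 2`, there is a `k`-hyperhole `H` with
`ω(H) = n` and `χ(H) = f_k(n)`. -/
theorem exists_hyperhole_chi_eq_ringF
    (k : ℕ) (hk : 5 ≤ k) (hko : Odd k) (n : ℕ) (hn : 2 ≤ n) :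
    ∃ (m : ℕ) (H : SimpleGraph (Fin m)), IsHyperhole H k ∧
      H.cliqueNum = n ∧ H.chromaticNumber = (ringF k n : ℕ∞) := by
  obtain ⟨c, hkc⟩ := hko
  have hkc' : k = 2 * c + 1 := by omega
  have hc : 2 ≤ c := by omega
  obtain ⟨h1, h2, h3⟩ := HHC.arith k c n hkc' hc hn
  refine ⟨k * n / 2, HHC.BG k n (k * n / 2), ?_, ?_, ?_⟩
  · exact HHC.BG_hyperhole k c n _ hkc' hc hn rfl
  · apply le_antisymm
    · obtain ⟨s, hs⟩ := SimpleGraph.exists_isNClique_cliqueNum (G := HHC.BG k n (k * n / 2))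
      have hb := HHC.clique_bound k c n _ hkc' hc hn rfl hs.isClique
      exact hs.card_eq ▸ hb
    · exact HHC.clique_lower k c n _ hkc' hc hn rfl
  · have hcol := HHC.BG_colorable k c n (k * n / 2) (ringF k n) (ringF k n * c - k * n / 2)
      hkc' hc hn rfl h1 h2 h3 rfl
    apply le_antisymm hcol.chromaticNumber_le
    rw [hcol.chromaticNumber_eq_sInf]
    have hle : ringF k n ≤ sInf {n' : ℕ | (HHC.BG k n (k * n / 2)).Colorable n'} := by
      have hne : {n' : ℕ | (HHC.BG k n (k * n / 2)).Colorable n'}.Nonempty :=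
        ⟨ringF k n, hcol⟩
      apply le_csInf hne
      intro b hb
      exact HHC.BG_chrom_lb k c n _ (ringF k n) hkc' hc hn rfl h2 b hb
    exact_mod_cast hle
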